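/- Let φ = (1+√5)/2 and A(x,y,z) = (5−√5)yz⁵ + (5+√5)y⁵z − 20y³z³ + (10+10√5)x²yz³ + (10−10√5)x²y³z − 10x⁴yz. For (x,y,z) ∈ ℝ³, (x,y,z) ≠ (0,0,0), the three polynomials A(x,y,z), A(y,z,x), A(z,x,y) vanish simultaneously if and only if (x,y,z) is a nonzero real scalar multiple of one of the following 31 directions: (φ,1,0), (φ,−1,0), (0,φ,1), (0,φ,−1), (1,0,φ), (−1,0,φ) [centres of pentagonal faces]; (1,1,1), (1,1,−1), (1,−1,1), (−1,1,1), (1/φ,φ,0), (1/φ,−φ,0), (φ,0,1/φ), (−φ,0,1/φ), (0,1/φ,φ), (0,1/φ,−φ) [centres of triangular faces]; (φ,1/φ,1), (φ,1/φ,−1), (φ,−1/φ,1), (φ,−1/φ,−1), (1,φ,1/φ), (1,φ,−1/φ), (−1,φ,1/φ), (−1,φ,−1/φ), (1/φ,1,φ), (1/φ,−1,φ), (−1/φ,1,φ), (−1/φ,−1,φ), (1,0,0), (0,1,0), (0,0,1) [midpoints of edges and vertices]. Equivalently, the icosahedral vector field has exactly 62 zeros on the unit sphere, equal to the number of faces (20),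 vertices (12) and edges (30) of an icosahedron. -/

import Mathlib

/-- The golden ratio. -/
noncomputable def φ : ℝ := (1 + Real.sqrt 5) / 2

/-- The numerator of the first component of the icosahedral superflow's vector field. -/
noncomputable def A (x y z : ℝ) : ℝ :=
  (5 - Real.sqrt 5) * y * z ^ 5 + (5 + Real.sqrt 5) * y ^ 5 * z - 20 * y ^ 3 * z ^ 3
    + (10 + 10 * Real.sqrt 5) * x ^ 2 * y * z ^ 3 + (10 - 10 * Real.sqrt 5) * x ^ 2 * y ^ 3 * z
    - 10 * x ^ 4 * y * z

/-- The 31 directions in which the icosahedral vector field vanishes: centres of pentagonal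
faces, centres of triangular faces, midpoints of edges and vertices of the icosahedron. -/
noncomputable def zeroDirections : Set (ℝ × ℝ × ℝ) :=
  { (φ, 1, 0), (φ, -1, 0), (0, φ, 1), (0, φ, -1), (1, 0, φ), (-1, 0, φ),
    (1, 1, 1), (1, 1, -1), (1, -1, 1), (-1, 1, 1),
    (1/φ, φ, 0), (1/φ, -φ, 0), (φ, 0, 1/φ), (-φ, 0, 1/φ), (0, 1/φ, φ), (0, 1/φ, -φ),
    (φ, 1/φ, 1), (φ, 1/φ, -1), (φ, -(1/φ), 1), (φ, -(1/φ), -1),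
    (1, φ, 1/φ), (1, φ, -(1/φ)), (-1, φ, 1/φ), (-1, φ, -(1/φ)),
    (1/φ, 1, φ), (1/φ, -1, φ), (-(1/φ), 1, φ), (-(1/φ), -1, φ),
    (1, 0, 0), (0, 1, 0), (0, 0, 1) }




noncomputable def Qf (x y z : ℝ) : ℝ :=
  (5 - Real.sqrt 5) * z^4 + (5 + Real.sqrt 5) * y^4 - 20*y^2*z^2
    + (10 + 10*Real.sqrt 5)*x^2*z^2 + (10 - 10*Real.sqrt 5)*x^2*y^2 - 10*x^4
lemma A_factor (x y z : ℝ) : A x y z = y * z * Qf x y z := by simp only [A, Qf]; ring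
lemma phi_val : φ = (1 + Real.sqrt 5)/2 := rfl
lemma phi_pos : 0 < φ := Real.goldenRatio_pos
lemma phi_sq : φ^2 = φ + 1 := Real.goldenRatio_sq
lemma phi_inv : 1/φ = φ - 1 := by
  rw [eq_comm, eq_div_iff (ne_of_gt phi_pos)]; linear_combination phi_sq
lemma phi_inv_val : 1/φ = (Real.sqrt 5 - 1)/2 := by rw [phi_inv, phi_val]; ring
lemma sq_split (a b r : ℝ) (h : a^2 = r^2 * b^2) : a = r*b ∨ a = -(r*b) := by
  have h' : (a - r*b) * (a + r*b) = 0 := by linear_combination h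
  rcases mul_eq_zero.1 h' with h''|h''
  · left; linarith
  · right; linarith


lemma phi_irr : Irrational φ := Real.goldenRatio_irrational
lemma phi_ne : φ ≠ 0 := ne_of_gt phi_pos

lemma phi_int_indep (a b : ℤ) (h : (a:ℝ) + b * φ = 0) : a = 0 ∧ b = 0 := by
  rcases eq_or_ne b 0 with hb | hb
  · subst hb; push_cast at h
    have : (a:ℝ) = 0 := by linarith
    exact ⟨by exact_mod_cast this, rfl⟩
  · exfalso
    have hb' : (b:ℝ) ≠ 0 := Int.cast_ne_zero.mpr hb
    have hφ : φ = ((-a / b : ℚ) : ℝ) := by push_cast; field_simp; linarith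
    exact (Rat.not_irrational _) (hφ ▸ phi_irr)

/-- evaluation of ℤ[φ] elements -/
noncomputable def ev2 (p : ℤ × ℤ) : ℝ := (p.1 : ℝ) + (p.2 : ℝ) * φ

lemma ev2_inj {p q : ℤ × ℤ} (h : ev2 p = ev2 q) : p = q := by
  have h' : ((p.1 - q.1 : ℤ) : ℝ) + ((p.2 - q.2 : ℤ)) * φ = 0 := by
    push_cast; simp only [ev2] at h; linarith
  obtain ⟨h1, h2⟩ := phi_int_indep _ _ h'
  have : p.1 = q.1 := by omega
  have : p.2 = q.2 := by omega
  exact Prod.ext (by omega) (by omega)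

def m2 (a b : ℤ × ℤ) : ℤ × ℤ := (a.1*b.1 + a.2*b.2, a.1*b.2 + a.2*b.1 + a.2*b.2)

lemma ev2_mul (a b : ℤ × ℤ) : ev2 (m2 a b) = ev2 a * ev2 b := by
  simp only [ev2, m2]; push_cast; linear_combination (-(a.2 : ℝ) * b.2) * phi_sq

def s2 (a b : ℤ × ℤ) : ℤ × ℤ := (a.1 - b.1, a.2 - b.2)
lemma ev2_sub (a b : ℤ × ℤ) : ev2 (s2 a b) = ev2 a - ev2 b := by
  simp only [ev2, s2]; push_cast; ring

abbrev V3 := (ℤ×ℤ) × (ℤ×ℤ) × (ℤ×ℤ)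
noncomputable def EV (u : V3) : ℝ × ℝ × ℝ := (ev2 u.1, ev2 u.2.1, ev2 u.2.2)
def crossK (u v : V3) : V3 :=
  (s2 (m2 u.2.1 v.2.2) (m2 u.2.2 v.2.1),
   s2 (m2 u.2.2 v.1) (m2 u.1 v.2.2),
   s2 (m2 u.1 v.2.1) (m2 u.2.1 v.1))
def crossR (p q : ℝ × ℝ × ℝ) : ℝ × ℝ × ℝ :=
  (p.2.1*q.2.2 - p.2.2*q.2.1, p.2.2*q.1 - p.1*q.2.2, p.1*q.2.1 - p.2.1*q.1)
lemma EV_cross (u v : V3) : crossR (EV u) (EV v) = EV (crossK u v) := by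
  simp only [crossR, crossK, EV, ev2_sub, ev2_mul]

lemma crossR_smul (q : ℝ × ℝ × ℝ) (t : ℝ) : crossR (t • q) q = ((0:ℝ), (0:ℝ), (0:ℝ)) := by
  obtain ⟨a, b, c⟩ := q
  simp only [crossR, Prod.smul_mk, smul_eq_mul]
  refine Prod.ext (by ring) (Prod.ext (by ring) (by ring))

lemma EV_inj {u v : V3} (h : EV u = EV v) : u = v := by
  simp only [EV, Prod.mk.injEq] at h
  exact Prod.ext (ev2_inj h.1) (Prod.ext (ev2_inj h.2.1) (ev2_inj h.2.2))

def LQ : List ((ℤ×ℤ)×(ℤ×ℤ)×(ℤ×ℤ)) := [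
  ((0,1), (1,0), (0,0)),
  ((0,1), (-1,0), (0,0)),
  ((0,0), (0,1), (1,0)),
  ((0,0), (0,1), (-1,0)),
  ((1,0), (0,0), (0,1)),
  ((-1,0), (0,0), (0,1)),
  ((1,0), (1,0), (1,0)),
  ((1,0), (1,0), (-1,0)),
  ((1,0), (-1,0), (1,0)),
  ((-1,0), (1,0), (1,0)),
  ((-1,1), (0,1), (0,0)),
  ((-1,1), (0,-1), (0,0)),
  ((0,1), (0,0), (-1,1)),
  ((0,-1), (0,0), (-1,1)),
  ((0,0), (-1,1), (0,1)),
  ((0,0), (-1,1), (0,-1)),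
  ((0,1), (-1,1), (1,0)),
  ((0,1), (-1,1), (-1,0)),
  ((0,1), (1,-1), (1,0)),
  ((0,1), (1,-1), (-1,0)),
  ((1,0), (0,1), (-1,1)),
  ((1,0), (0,1), (1,-1)),
  ((-1,0), (0,1), (-1,1)),
  ((-1,0), (0,1), (1,-1)),
  ((-1,1), (1,0), (0,1)),
  ((-1,1), (-1,0), (0,1)),
  ((1,-1), (1,0), (0,1)),
  ((1,-1), (-1,0), (0,1)),
  ((1,0), (0,0), (0,0)),
  ((0,0), (1,0), (0,0)),
  ((0,0), (0,0), (1,0))]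

set_option maxRecDepth 100000 in
lemma LQ_cross : ∀ a ∈ LQ, ∀ b ∈ LQ, crossK a b = 0 → a = b := by decide
noncomputable def dirList : List (ℝ × ℝ × ℝ) := [
  (φ, 1, 0),
  (φ, -1, 0),
  (0, φ, 1),
  (0, φ, -1),
  (1, 0, φ),
  (-1, 0, φ),
  (1, 1, 1),
  (1, 1, -1),
  (1, -1, 1),
  (-1, 1, 1),
  (1/φ, φ, 0),
  (1/φ, -φ, 0),
  (φ, 0, 1/φ),
  (-φ, 0, 1/φ),
  (0, 1/φ, φ),
  (0, 1/φ, -φ),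
  (φ, 1/φ, 1),
  (φ, 1/φ, -1),
  (φ, -(1/φ), 1),
  (φ, -(1/φ), -1),
  (1, φ, 1/φ),
  (1, φ, -(1/φ)),
  (-1, φ, 1/φ),
  (-1, φ, -(1/φ)),
  (1/φ, 1, φ),
  (1/φ, -1, φ),
  (-(1/φ), 1, φ),
  (-(1/φ), -1, φ),
  (1, 0, 0),
  (0, 1, 0),
  (0, 0, 1)]




lemma phi_inv' : φ⁻¹ = -1 + φ := by rw [← one_div, phi_inv]; ring

lemma dirEq : dirList = LQ.map EV := by
  simp only [dirList, LQ, EV, ev2, List.map]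
  norm_num [phi_inv, Prod.ext_iff]
  ring_nf
  norm_num
  refine ⟨?_,?_,?_,?_,?_,?_,?_,?_⟩ <;> rw [phi_inv'] <;> ring

lemma zd_eq : zeroDirections = {p | p ∈ dirList} := by
  ext p
  simp only [zeroDirections, dirList, Set.mem_insert_iff, Set.mem_singleton_iff,
    Set.mem_setOf_eq, List.mem_cons, List.not_mem_nil, or_false]

lemma np : ∀ p ∈ dirList, ∀ q ∈ dirList, ∀ t : ℝ, p = t • q → p = q := by
  rw [dirEq]
  intro p hp q hq t hpq
  obtain ⟨a, ha, rfl⟩ := List.mem_map.1 hp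
  obtain ⟨b, hb, rfl⟩ := List.mem_map.1 hq
  have h0 : crossR (EV a) (EV b) = ((0:ℝ),(0:ℝ),(0:ℝ)) := hpq ▸ crossR_smul (EV b) t
  rw [EV_cross] at h0
  have : crossK a b = ((0,0),(0,0),(0,0)) := EV_inj (h0.trans (by simp [EV, ev2]))
  exact congrArg EV (LQ_cross a ha b hb this)

lemma dir_nodup : dirList.Nodup := by
  rw [dirEq]
  refine List.Nodup.map (fun a b h => EV_inj h) ?_
  decide

lemma dir_len : dirList.length = 31 := by simp [dirList]

lemma Tall : ∀ x y z : ℝ, (x, y, z) ∈ zeroDirections → A x y z = 0 ∧ A y z x = 0 ∧ A z x y = 0 := by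
  have h5 : Real.sqrt 5 ^ 2 = 5 := Real.sq_sqrt (by norm_num)
  intro x y z hp
  simp only [zeroDirections, Set.mem_insert_iff, Set.mem_singleton_iff, Prod.mk.injEq] at hp
  rcases hp with ⟨rfl,rfl,rfl⟩|⟨rfl,rfl,rfl⟩|⟨rfl,rfl,rfl⟩|⟨rfl,rfl,rfl⟩|⟨rfl,rfl,rfl⟩|⟨rfl,rfl,rfl⟩|⟨rfl,rfl,rfl⟩|⟨rfl,rfl,rfl⟩|⟨rfl,rfl,rfl⟩|⟨rfl,rfl,rfl⟩|⟨rfl,rfl,rfl⟩|⟨rfl,rfl,rfl⟩|⟨rfl,rfl,rfl⟩|⟨rfl,rfl,rfl⟩|⟨rfl,rfl,rfl⟩|⟨rfl,rfl,rfl⟩|⟨rfl,rfl,rfl⟩|⟨rfl,rfl,rfl⟩|⟨rfl,rfl,rfl⟩|⟨rfl,rfl,rfl⟩|⟨rfl,rfl,rfl⟩|⟨rfl,rfl,rfl⟩|⟨rfl,rfl,rfl⟩|⟨rfl,rfl,rfl⟩|⟨rfl,rfl,rfl⟩|⟨rfl,rfl,rfl⟩|⟨rfl,rfl,rfl⟩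|⟨rfl,rfl,rfl⟩|⟨rfl,rfl,rfl⟩|⟨rfl,rfl,rfl⟩|⟨rfl,rfl,rfl⟩
  · exact ⟨by rw [phi_val]; simp only [A]; ring, by rw [phi_val]; simp only [A]; ring, by rw [phi_val]; simp only [A]; linear_combination ((-1/32) + (15/16)*Real.sqrt 5 + (5/4)*Real.sqrt 5^2 + (5/16)*Real.sqrt 5^3 + (1/32)*Real.sqrt 5^4) * h5⟩
  · exact ⟨by rw [phi_val]; simp only [A]; ring, by rw [phi_val]; simp only [A]; ring, by rw [phi_val]; simp only [A]; linear_combination ((1/32) + (-15/16)*Real.sqrt 5 + (-5/4)*Real.sqrt 5^2 + (-5/16)*Real.sqrt 5^3 + (-1/32)*Real.sqrt 5^4) * h5⟩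
  · exact ⟨by rw [phi_val]; simp only [A]; linear_combination ((-1/32) + (15/16)*Real.sqrt 5 + (5/4)*Real.sqrt 5^2 + (5/16)*Real.sqrt 5^3 + (1/32)*Real.sqrt 5^4) * h5, by rw [phi_val]; simp only [A]; ring, by rw [phi_val]; simp only [A]; ring⟩
  · exact ⟨by rw [phi_val]; simp only [A]; linear_combination ((1/32) + (-15/16)*Real.sqrt 5 + (-5/4)*Real.sqrt 5^2 + (-5/16)*Real.sqrt 5^3 + (-1/32)*Real.sqrt 5^4) * h5, by rw [phi_val]; simp only [A]; ring, by rw [phi_val]; simp only [A]; ring⟩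
  · exact ⟨by rw [phi_val]; simp only [A]; ring, by rw [phi_val]; simp only [A]; linear_combination ((-1/32) + (15/16)*Real.sqrt 5 + (5/4)*Real.sqrt 5^2 + (5/16)*Real.sqrt 5^3 + (1/32)*Real.sqrt 5^4) * h5, by rw [phi_val]; simp only [A]; ring⟩
  · exact ⟨by rw [phi_val]; simp only [A]; ring, by rw [phi_val]; simp only [A]; linear_combination ((1/32) + (-15/16)*Real.sqrt 5 + (-5/4)*Real.sqrt 5^2 + (-5/16)*Real.sqrt 5^3 + (-1/32)*Real.sqrt 5^4) * h5, by rw [phi_val]; simp only [A]; ring⟩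
  · exact ⟨by simp only [A]; ring, by simp only [A]; ring, by simp only [A]; ring⟩
  · exact ⟨by simp only [A]; ring, by simp only [A]; ring, by simp only [A]; ring⟩
  · exact ⟨by simp only [A]; ring, by simp only [A]; ring, by simp only [A]; ring⟩
  · exact ⟨by simp only [A]; ring, by simp only [A]; ring, by simp only [A]; ring⟩
  · exact ⟨by rw [phi_inv_val]; rw [phi_val]; simp only [A]; ring, by rw [phi_inv_val]; rw [phi_val]; simp only [A]; ring, by rw [phi_inv_val]; rw [phi_val]; simp only [A]; linear_combination ((-1/32) + (5/16)*Real.sqrt 5^2 + (-9/32)*Real.sqrt 5^4) * h5⟩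
  · exact ⟨by rw [phi_inv_val]; rw [phi_val]; simp only [A]; ring, by rw [phi_inv_val]; rw [phi_val]; simp only [A]; ring, by rw [phi_inv_val]; rw [phi_val]; simp only [A]; linear_combination ((1/32) + (-5/16)*Real.sqrt 5^2 + (9/32)*Real.sqrt 5^4) * h5⟩
  · exact ⟨by rw [phi_inv_val]; rw [phi_val]; simp only [A]; ring, by rw [phi_inv_val]; rw [phi_val]; simp only [A]; linear_combination ((-1/32) + (5/16)*Real.sqrt 5^2 + (-9/32)*Real.sqrt 5^4) * h5, by rw [phi_inv_val]; rw [phi_val]; simp only [A]; ring⟩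
  · exact ⟨by rw [phi_inv_val]; rw [phi_val]; simp only [A]; ring, by rw [phi_inv_val]; rw [phi_val]; simp only [A]; linear_combination ((1/32) + (-5/16)*Real.sqrt 5^2 + (9/32)*Real.sqrt 5^4) * h5, by rw [phi_inv_val]; rw [phi_val]; simp only [A]; ring⟩
  · exact ⟨by rw [phi_inv_val]; rw [phi_val]; simp only [A]; linear_combination ((-1/32) + (5/16)*Real.sqrt 5^2 + (-9/32)*Real.sqrt 5^4) * h5, by rw [phi_inv_val]; rw [phi_val]; simp only [A]; ring, by rw [phi_inv_val]; rw [phi_val]; simp only [A]; ring⟩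
  · exact ⟨by rw [phi_inv_val]; rw [phi_val]; simp only [A]; linear_combination ((1/32) + (-5/16)*Real.sqrt 5^2 + (9/32)*Real.sqrt 5^4) * h5, by rw [phi_inv_val]; rw [phi_val]; simp only [A]; ring, by rw [phi_inv_val]; rw [phi_val]; simp only [A]; ring⟩
  · exact ⟨by rw [phi_inv_val]; rw [phi_val]; simp only [A]; linear_combination ((9/32) + (15/16)*Real.sqrt 5 + (-5/4)*Real.sqrt 5^2 + (5/16)*Real.sqrt 5^3 + (-9/32)*Real.sqrt 5^4) * h5, by rw [phi_inv_val]; rw [phi_val]; simp only [A]; linear_combination ((-9/32) + (15/16)*Real.sqrt 5 + (5/4)*Real.sqrt 5^2 + (5/16)*Real.sqrt 5^3 + (9/32)*Real.sqrt 5^4) * h5, by rw [phi_inv_val]; rw [phi_val]; simp only [A]; linear_combination ((-9/32) + (5/16)*Real.sqrt 5^2 + (-1/32)*Real.sqrt 5^4) * h5⟩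
  · exact ⟨by rw [phi_inv_val]; rw [phi_val]; simp only [A]; linear_combination ((-9/32) + (-15/16)*Real.sqrt 5 + (5/4)*Real.sqrt 5^2 + (-5/16)*Real.sqrt 5^3 + (9/32)*Real.sqrt 5^4) * h5, by rw [phi_inv_val]; rw [phi_val]; simp only [A]; linear_combination ((9/32) + (-15/16)*Real.sqrt 5 + (-5/4)*Real.sqrt 5^2 + (-5/16)*Real.sqrt 5^3 + (-9/32)*Real.sqrt 5^4) * h5, by rw [phi_inv_val]; rw [phi_val]; simp only [A]; linear_combination ((-9/32) + (5/16)*Real.sqrt 5^2 + (-1/32)*Real.sqrt 5^4) * h5⟩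
  · exact ⟨by rw [phi_inv_val]; rw [phi_val]; simp only [A]; linear_combination ((-9/32) + (-15/16)*Real.sqrt 5 + (5/4)*Real.sqrt 5^2 + (-5/16)*Real.sqrt 5^3 + (9/32)*Real.sqrt 5^4) * h5, by rw [phi_inv_val]; rw [phi_val]; simp only [A]; linear_combination ((-9/32) + (15/16)*Real.sqrt 5 + (5/4)*Real.sqrt 5^2 + (5/16)*Real.sqrt 5^3 + (9/32)*Real.sqrt 5^4) * h5, by rw [phi_inv_val]; rw [phi_val]; simp only [A]; linear_combination ((9/32) + (-5/16)*Real.sqrt 5^2 + (1/32)*Real.sqrt 5^4) * h5⟩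
  · exact ⟨by rw [phi_inv_val]; rw [phi_val]; simp only [A]; linear_combination ((9/32) + (15/16)*Real.sqrt 5 + (-5/4)*Real.sqrt 5^2 + (5/16)*Real.sqrt 5^3 + (-9/32)*Real.sqrt 5^4) * h5, by rw [phi_inv_val]; rw [phi_val]; simp only [A]; linear_combination ((9/32) + (-15/16)*Real.sqrt 5 + (-5/4)*Real.sqrt 5^2 + (-5/16)*Real.sqrt 5^3 + (-9/32)*Real.sqrt 5^4) * h5, by rw [phi_inv_val]; rw [phi_val]; simp only [A]; linear_combination ((9/32) + (-5/16)*Real.sqrt 5^2 + (1/32)*Real.sqrt 5^4) * h5⟩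
  · exact ⟨by rw [phi_inv_val]; rw [phi_val]; simp only [A]; linear_combination ((-9/32) + (5/16)*Real.sqrt 5^2 + (-1/32)*Real.sqrt 5^4) * h5, by rw [phi_inv_val]; rw [phi_val]; simp only [A]; linear_combination ((9/32) + (15/16)*Real.sqrt 5 + (-5/4)*Real.sqrt 5^2 + (5/16)*Real.sqrt 5^3 + (-9/32)*Real.sqrt 5^4) * h5, by rw [phi_inv_val]; rw [phi_val]; simp only [A]; linear_combination ((-9/32) + (15/16)*Real.sqrt 5 + (5/4)*Real.sqrt 5^2 + (5/16)*Real.sqrt 5^3 + (9/32)*Real.sqrt 5^4) * h5⟩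
  · exact ⟨by rw [phi_inv_val]; rw [phi_val]; simp only [A]; linear_combination ((9/32) + (-5/16)*Real.sqrt 5^2 + (1/32)*Real.sqrt 5^4) * h5, by rw [phi_inv_val]; rw [phi_val]; simp only [A]; linear_combination ((-9/32) + (-15/16)*Real.sqrt 5 + (5/4)*Real.sqrt 5^2 + (-5/16)*Real.sqrt 5^3 + (9/32)*Real.sqrt 5^4) * h5, by rw [phi_inv_val]; rw [phi_val]; simp only [A]; linear_combination ((-9/32) + (15/16)*Real.sqrt 5 + (5/4)*Real.sqrt 5^2 + (5/16)*Real.sqrt 5^3 + (9/32)*Real.sqrt 5^4) * h5⟩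
  · exact ⟨by rw [phi_inv_val]; rw [phi_val]; simp only [A]; linear_combination ((-9/32) + (5/16)*Real.sqrt 5^2 + (-1/32)*Real.sqrt 5^4) * h5, by rw [phi_inv_val]; rw [phi_val]; simp only [A]; linear_combination ((-9/32) + (-15/16)*Real.sqrt 5 + (5/4)*Real.sqrt 5^2 + (-5/16)*Real.sqrt 5^3 + (9/32)*Real.sqrt 5^4) * h5, by rw [phi_inv_val]; rw [phi_val]; simp only [A]; linear_combination ((9/32) + (-15/16)*Real.sqrt 5 + (-5/4)*Real.sqrt 5^2 + (-5/16)*Real.sqrt 5^3 + (-9/32)*Real.sqrt 5^4) * h5⟩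
  · exact ⟨by rw [phi_inv_val]; rw [phi_val]; simp only [A]; linear_combination ((9/32) + (-5/16)*Real.sqrt 5^2 + (1/32)*Real.sqrt 5^4) * h5, by rw [phi_inv_val]; rw [phi_val]; simp only [A]; linear_combination ((9/32) + (15/16)*Real.sqrt 5 + (-5/4)*Real.sqrt 5^2 + (5/16)*Real.sqrt 5^3 + (-9/32)*Real.sqrt 5^4) * h5, by rw [phi_inv_val]; rw [phi_val]; simp only [A]; linear_combination ((9/32) + (-15/16)*Real.sqrt 5 + (-5/4)*Real.sqrt 5^2 + (-5/16)*Real.sqrt 5^3 + (-9/32)*Real.sqrt 5^4) * h5⟩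
  · exact ⟨by rw [phi_inv_val]; rw [phi_val]; simp only [A]; linear_combination ((-9/32) + (15/16)*Real.sqrt 5 + (5/4)*Real.sqrt 5^2 + (5/16)*Real.sqrt 5^3 + (9/32)*Real.sqrt 5^4) * h5, by rw [phi_inv_val]; rw [phi_val]; simp only [A]; linear_combination ((-9/32) + (5/16)*Real.sqrt 5^2 + (-1/32)*Real.sqrt 5^4) * h5, by rw [phi_inv_val]; rw [phi_val]; simp only [A]; linear_combination ((9/32) + (15/16)*Real.sqrt 5 + (-5/4)*Real.sqrt 5^2 + (5/16)*Real.sqrt 5^3 + (-9/32)*Real.sqrt 5^4) * h5⟩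
  · exact ⟨by rw [phi_inv_val]; rw [phi_val]; simp only [A]; linear_combination ((9/32) + (-15/16)*Real.sqrt 5 + (-5/4)*Real.sqrt 5^2 + (-5/16)*Real.sqrt 5^3 + (-9/32)*Real.sqrt 5^4) * h5, by rw [phi_inv_val]; rw [phi_val]; simp only [A]; linear_combination ((-9/32) + (5/16)*Real.sqrt 5^2 + (-1/32)*Real.sqrt 5^4) * h5, by rw [phi_inv_val]; rw [phi_val]; simp only [A]; linear_combination ((-9/32) + (-15/16)*Real.sqrt 5 + (5/4)*Real.sqrt 5^2 + (-5/16)*Real.sqrt 5^3 + (9/32)*Real.sqrt 5^4) * h5⟩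
  · exact ⟨by rw [phi_inv_val]; rw [phi_val]; simp only [A]; linear_combination ((-9/32) + (15/16)*Real.sqrt 5 + (5/4)*Real.sqrt 5^2 + (5/16)*Real.sqrt 5^3 + (9/32)*Real.sqrt 5^4) * h5, by rw [phi_inv_val]; rw [phi_val]; simp only [A]; linear_combination ((9/32) + (-5/16)*Real.sqrt 5^2 + (1/32)*Real.sqrt 5^4) * h5, by rw [phi_inv_val]; rw [phi_val]; simp only [A]; linear_combination ((-9/32) + (-15/16)*Real.sqrt 5 + (5/4)*Real.sqrt 5^2 + (-5/16)*Real.sqrt 5^3 + (9/32)*Real.sqrt 5^4) * h5⟩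
  · exact ⟨by rw [phi_inv_val]; rw [phi_val]; simp only [A]; linear_combination ((9/32) + (-15/16)*Real.sqrt 5 + (-5/4)*Real.sqrt 5^2 + (-5/16)*Real.sqrt 5^3 + (-9/32)*Real.sqrt 5^4) * h5, by rw [phi_inv_val]; rw [phi_val]; simp only [A]; linear_combination ((9/32) + (-5/16)*Real.sqrt 5^2 + (1/32)*Real.sqrt 5^4) * h5, by rw [phi_inv_val]; rw [phi_val]; simp only [A]; linear_combination ((9/32) + (15/16)*Real.sqrt 5 + (-5/4)*Real.sqrt 5^2 + (5/16)*Real.sqrt 5^3 + (-9/32)*Real.sqrt 5^4) * h5⟩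
  · exact ⟨by simp only [A]; ring, by simp only [A]; ring, by simp only [A]; ring⟩
  · exact ⟨by simp only [A]; ring, by simp only [A]; ring, by simp only [A]; ring⟩
  · exact ⟨by simp only [A]; ring, by simp only [A]; ring, by simp only [A]; ring⟩

set_option maxHeartbeats 2000000 in
lemma core0 (x y : ℝ) (hx : x ≠ 0) (hy : y ≠ 0) (hQ : Qf 0 x y = 0) :
    ∃ c : ℝ, c ≠ 0 ∧ ∃ d ∈ zeroDirections, (x, y, (0:ℝ)) = c • d := by
  have h5 : Real.sqrt 5 ^ 2 = 5 := Real.sq_sqrt (by norm_num)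
  have hs0 : (0:ℝ) ≤ Real.sqrt 5 := Real.sqrt_nonneg 5
  have h51 : 1 < Real.sqrt 5 := by nlinarith
  have hine : (Real.sqrt 5 - 1)/2 ≠ 0 := ne_of_gt (by nlinarith)
  simp only [Qf] at hQ
  have h4 : (5 + Real.sqrt 5) * ((x - ((1 + Real.sqrt 5)/2)*y) * (x + ((1 + Real.sqrt 5)/2)*y)) * ((x - ((3 - Real.sqrt 5)/2)*y) * (x + ((3 - Real.sqrt 5)/2)*y)) = 0 := by
    linear_combination hQ + ((7/16)*y^4 + (-3/2)*x^2*y^2 + (-17/16)*Real.sqrt 5*y^4 + (-1/2)*Real.sqrt 5*x^2*y^2 + (1/16)*Real.sqrt 5^2*y^4 + (1/16)*Real.sqrt 5^3*y^4) * h5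
  have h5p : (5 + Real.sqrt 5) ≠ 0 := by positivity
  rcases mul_eq_zero.1 h4 with h' | h''
  · rcases mul_eq_zero.1 ((mul_eq_zero.1 h').resolve_left h5p) with h'' | h''
    · have hx1 : x = ((1 + Real.sqrt 5)/2)*y := by linarith
      refine ⟨y, hy, (φ, 1, 0), by simp only [zeroDirections, Set.mem_insert_iff, Set.mem_singleton_iff, eq_self_iff_true, true_or, or_true], ?_⟩
      simp only [Prod.smul_mk, smul_eq_mul, Prod.mk.injEq]
      exact ⟨by rw [phi_val]; linear_combination hx1, by ring, by ring⟩
    · have hx1 : x = -(((1 + Real.sqrt 5)/2)*y) := by linarith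
      refine ⟨(-y), neg_ne_zero.mpr hy, (φ, -1, 0), by simp only [zeroDirections, Set.mem_insert_iff, Set.mem_singleton_iff, eq_self_iff_true, true_or, or_true], ?_⟩
      simp only [Prod.smul_mk, smul_eq_mul, Prod.mk.injEq]
      exact ⟨by rw [phi_val]; linear_combination hx1, by ring, by ring⟩
  · rcases mul_eq_zero.1 h'' with h3 | h3
    · have hx1 : x = ((3 - Real.sqrt 5)/2)*y := by linarith
      refine ⟨(y*((Real.sqrt 5 - 1)/2)), mul_ne_zero hy hine, (1/φ, φ, 0), by simp only [zeroDirections, Set.mem_insert_iff, Set.mem_singleton_iff, eq_self_iff_true, true_or, or_true], ?_⟩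
      simp only [Prod.smul_mk, smul_eq_mul, Prod.mk.injEq]
      exact ⟨by rw [phi_inv_val]; linear_combination hx1 + ((-1/4)*y) * h5, by rw [phi_val]; linear_combination ((-1/4)*y) * h5, by ring⟩
    · have hx1 : x = -(((3 - Real.sqrt 5)/2)*y) := by linarith
      refine ⟨(-(y*((Real.sqrt 5 - 1)/2))), neg_ne_zero.mpr (mul_ne_zero hy hine), (1/φ, -φ, 0), by simp only [zeroDirections, Set.mem_insert_iff, Set.mem_singleton_iff, eq_self_iff_true, true_or, or_true], ?_⟩
      simp only [Prod.smul_mk, smul_eq_mul, Prod.mk.injEq]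
      exact ⟨by rw [phi_inv_val]; linear_combination hx1 + ((1/4)*y) * h5, by rw [phi_val]; linear_combination ((-1/4)*y) * h5, by ring⟩

set_option maxHeartbeats 4000000 in
lemma coreMain (x y z : ℝ) (hx : x ≠ 0) (hy : y ≠ 0) (hz : z ≠ 0)
    (hQ1 : Qf x y z = 0) (hQ2 : Qf y z x = 0) :
    ∃ c : ℝ, c ≠ 0 ∧ ∃ d ∈ zeroDirections, (x, y, z) = c • d := by
  have h5 : Real.sqrt 5 ^ 2 = 5 := Real.sq_sqrt (by norm_num)
  simp only [Qf] at hQ1 hQ2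
  have hMN1 : (2*x^2 + (3 + Real.sqrt 5)*y^2 - (5 + Real.sqrt 5)*z^2) * (2*x^2 + (Real.sqrt 5 - 3)*y^2) = 0 := by
    linear_combination ((-1/4) + (-1/20)*Real.sqrt 5) * hQ1 + ((1/4) + (-1/20)*Real.sqrt 5) * hQ2 + ((-3/2)*y^2*z^2 + (21/20)*y^4 + (1/2)*x^2*z^2 + (-1/20)*x^4) * h5
  have hMN2 : (2*x^2 + (Real.sqrt 5 - 5)*y^2 + (3 - Real.sqrt 5)*z^2) * (2*x^2 - (3 + Real.sqrt 5)*z^2) = 0 := by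
    linear_combination (-1/2) * hQ1 + ((-1/4) + (-1/20)*Real.sqrt 5) * hQ2 + ((21/20)*z^4 + (-3/2)*y^2*z^2 + (1/2)*x^2*y^2 + (-1/20)*x^4) * h5
  rcases mul_eq_zero.1 hMN1 with h1 | h1 <;> rcases mul_eq_zero.1 hMN2 with h2 | h2
  · -- P0 : x^2=y^2=z^2
    have ex : x^2 = (1:ℝ)^2 * y^2 := by linear_combination ((3/16) + (-1/16)*Real.sqrt 5) * h1 + ((5/16) + (1/16)*Real.sqrt 5) * h2
    have ez : z^2 = (1:ℝ)^2 * y^2 := by linear_combination ((-1/8)) * h1 + ((1/8)) * h2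
    rcases sq_split x y (1:ℝ) ex with hA | hA <;> rcases sq_split z y (1:ℝ) ez with hB | hB
    ·
      refine ⟨y, hy, (1, 1, 1), by simp only [zeroDirections, Set.mem_insert_iff, Set.mem_singleton_iff, eq_self_iff_true, true_or, or_true], ?_⟩
      simp only [Prod.smul_mk, smul_eq_mul, Prod.mk.injEq]
      exact ⟨by linear_combination hA, by ring, by linear_combination hB⟩
    ·
      refine ⟨y, hy, (1, 1, -1), by simp only [zeroDirections, Set.mem_insert_iff, Set.mem_singleton_iff, eq_self_iff_true, true_or, or_true], ?_⟩
      simp only [Prod.smul_mk, smul_eq_mul, Prod.mk.injEq]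
      exact ⟨by linear_combination hA, by ring, by linear_combination hB⟩
    ·
      refine ⟨y, hy, (-1, 1, 1), by simp only [zeroDirections, Set.mem_insert_iff, Set.mem_singleton_iff, eq_self_iff_true, true_or, or_true], ?_⟩
      simp only [Prod.smul_mk, smul_eq_mul, Prod.mk.injEq]
      exact ⟨by linear_combination hA, by ring, by linear_combination hB⟩
    ·
      refine ⟨(-y), neg_ne_zero.mpr hy, (1, -1, 1), by simp only [zeroDirections, Set.mem_insert_iff, Set.mem_singleton_iff, eq_self_iff_true, true_or, or_true], ?_⟩
      simp only [Prod.smul_mk, smul_eq_mul, Prod.mk.injEq]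
      exact ⟨by linear_combination hA, by ring, by linear_combination hB⟩
  · -- P1
    have ex : x^2 = ((1 + Real.sqrt 5)/2)^2 * z^2 := by linear_combination ((1/2)) * h2 + ((-1/4)*z^2) * h5
    have ey : y^2 = ((Real.sqrt 5 - 1)/2)^2 * z^2 := by linear_combination ((3/4) + (-1/4)*Real.sqrt 5) * h1 + ((-3/4) + (1/4)*Real.sqrt 5) * h2 + ((-1/4)*z^2 + (1/4)*y^2) * h5
    rcases sq_split x z ((1 + Real.sqrt 5)/2) ex with hA | hA <;> rcases sq_split y z ((Real.sqrt 5 - 1)/2) ey with hB | hB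
    ·
      refine ⟨z, hz, (φ, 1/φ, 1), by simp only [zeroDirections, Set.mem_insert_iff, Set.mem_singleton_iff, eq_self_iff_true, true_or, or_true], ?_⟩
      simp only [Prod.smul_mk, smul_eq_mul, Prod.mk.injEq]
      exact ⟨by rw [phi_val]; linear_combination hA, by rw [phi_inv_val]; linear_combination hB, by ring⟩
    ·
      refine ⟨z, hz, (φ, -(1/φ), 1), by simp only [zeroDirections, Set.mem_insert_iff, Set.mem_singleton_iff, eq_self_iff_true, true_or, or_true], ?_⟩
      simp only [Prod.smul_mk, smul_eq_mul, Prod.mk.injEq]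
      exact ⟨by rw [phi_val]; linear_combination hA, by rw [phi_inv_val]; linear_combination hB, by ring⟩
    ·
      refine ⟨(-z), neg_ne_zero.mpr hz, (φ, -(1/φ), -1), by simp only [zeroDirections, Set.mem_insert_iff, Set.mem_singleton_iff, eq_self_iff_true, true_or, or_true], ?_⟩
      simp only [Prod.smul_mk, smul_eq_mul, Prod.mk.injEq]
      exact ⟨by rw [phi_val]; linear_combination hA, by rw [phi_inv_val]; linear_combination hB, by ring⟩
    ·
      refine ⟨(-z), neg_ne_zero.mpr hz, (φ, 1/φ, -1), by simp only [zeroDirections, Set.mem_insert_iff, Set.mem_singleton_iff, eq_self_iff_true, true_or, or_true], ?_⟩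
      simp only [Prod.smul_mk, smul_eq_mul, Prod.mk.injEq]
      exact ⟨by rw [phi_val]; linear_combination hA, by rw [phi_inv_val]; linear_combination hB, by ring⟩
  · -- P2
    have ex : x^2 = ((Real.sqrt 5 - 1)/2)^2 * y^2 := by linear_combination ((1/2)) * h1 + ((-1/4)*y^2) * h5
    have ez : z^2 = ((1 + Real.sqrt 5)/2)^2 * y^2 := by linear_combination ((-3/4) + (-1/4)*Real.sqrt 5) * h1 + ((3/4) + (1/4)*Real.sqrt 5) * h2 + ((1/4)*z^2 + (-1/4)*y^2) * h5
    rcases sq_split x y ((Real.sqrt 5 - 1)/2) ex with hA | hA <;> rcases sq_split z y ((1 + Real.sqrt 5)/2) ez with hB | hB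
    ·
      refine ⟨y, hy, (1/φ, 1, φ), by simp only [zeroDirections, Set.mem_insert_iff, Set.mem_singleton_iff, eq_self_iff_true, true_or, or_true], ?_⟩
      simp only [Prod.smul_mk, smul_eq_mul, Prod.mk.injEq]
      exact ⟨by rw [phi_inv_val]; linear_combination hA, by ring, by rw [phi_val]; linear_combination hB⟩
    ·
      refine ⟨(-y), neg_ne_zero.mpr hy, (-(1/φ), -1, φ), by simp only [zeroDirections, Set.mem_insert_iff, Set.mem_singleton_iff, eq_self_iff_true, true_or, or_true], ?_⟩
      simp only [Prod.smul_mk, smul_eq_mul, Prod.mk.injEq]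
      exact ⟨by rw [phi_inv_val]; linear_combination hA, by ring, by rw [phi_val]; linear_combination hB⟩
    ·
      refine ⟨y, hy, (-(1/φ), 1, φ), by simp only [zeroDirections, Set.mem_insert_iff, Set.mem_singleton_iff, eq_self_iff_true, true_or, or_true], ?_⟩
      simp only [Prod.smul_mk, smul_eq_mul, Prod.mk.injEq]
      exact ⟨by rw [phi_inv_val]; linear_combination hA, by ring, by rw [phi_val]; linear_combination hB⟩
    ·
      refine ⟨(-y), neg_ne_zero.mpr hy, (1/φ, -1, φ), by simp only [zeroDirections, Set.mem_insert_iff, Set.mem_singleton_iff, eq_self_iff_true, true_or, or_true], ?_⟩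
      simp only [Prod.smul_mk, smul_eq_mul, Prod.mk.injEq]
      exact ⟨by rw [phi_inv_val]; linear_combination hA, by ring, by rw [phi_val]; linear_combination hB⟩
  · -- P3
    have ey : y^2 = ((1 + Real.sqrt 5)/2)^2 * x^2 := by linear_combination ((-3/4) + (-1/4)*Real.sqrt 5) * h1 + ((1/4)*y^2 + (-1/4)*x^2) * h5
    have ez : z^2 = ((Real.sqrt 5 - 1)/2)^2 * x^2 := by linear_combination ((-3/4) + (1/4)*Real.sqrt 5) * h2 + ((1/4)*z^2 + (-1/4)*x^2) * h5
    rcases sq_split y x ((1 + Real.sqrt 5)/2) ey with hA | hA <;> rcases sq_split z x ((Real.sqrt 5 - 1)/2) ez with hB | hB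
    ·
      refine ⟨x, hx, (1, φ, 1/φ), by simp only [zeroDirections, Set.mem_insert_iff, Set.mem_singleton_iff, eq_self_iff_true, true_or, or_true], ?_⟩
      simp only [Prod.smul_mk, smul_eq_mul, Prod.mk.injEq]
      exact ⟨by ring, by rw [phi_val]; linear_combination hA, by rw [phi_inv_val]; linear_combination hB⟩
    ·
      refine ⟨x, hx, (1, φ, -(1/φ)), by simp only [zeroDirections, Set.mem_insert_iff, Set.mem_singleton_iff, eq_self_iff_true, true_or, or_true], ?_⟩
      simp only [Prod.smul_mk, smul_eq_mul, Prod.mk.injEq]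
      exact ⟨by ring, by rw [phi_val]; linear_combination hA, by rw [phi_inv_val]; linear_combination hB⟩
    ·
      refine ⟨(-x), neg_ne_zero.mpr hx, (-1, φ, -(1/φ)), by simp only [zeroDirections, Set.mem_insert_iff, Set.mem_singleton_iff, eq_self_iff_true, true_or, or_true], ?_⟩
      simp only [Prod.smul_mk, smul_eq_mul, Prod.mk.injEq]
      exact ⟨by ring, by rw [phi_val]; linear_combination hA, by rw [phi_inv_val]; linear_combination hB⟩
    ·
      refine ⟨(-x), neg_ne_zero.mpr hx, (-1, φ, 1/φ), by simp only [zeroDirections, Set.mem_insert_iff, Set.mem_singleton_iff, eq_self_iff_true, true_or, or_true], ?_⟩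
      simp only [Prod.smul_mk, smul_eq_mul, Prod.mk.injEq]
      exact ⟨by ring, by rw [phi_val]; linear_combination hA, by rw [phi_inv_val]; linear_combination hB⟩

lemma Ahom (c x y z : ℝ) : A (c*x) (c*y) (c*z) = c^6 * A x y z := by
  simp only [A]; ring

lemma LQ_shift : ∀ a ∈ LQ, ((a.2.2, a.1, a.2.1) : V3) ∈ LQ := by decide
lemma LQ_zero : (((0,0),(0,0),(0,0)) : V3) ∉ LQ := by decide

lemma zd_shift {p : ℝ × ℝ × ℝ} (hp : p ∈ zeroDirections) :
    (p.2.2, p.1, p.2.1) ∈ zeroDirections := by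
  rw [zd_eq] at hp ⊢
  simp only [Set.mem_setOf_eq, dirEq] at hp ⊢
  obtain ⟨a, ha, rfl⟩ := List.mem_map.1 hp
  exact List.mem_map.2 ⟨(a.2.2, a.1, a.2.1), LQ_shift a ha, rfl⟩

lemma dir_ne_zero {p : ℝ × ℝ × ℝ} (hp : p ∈ zeroDirections) : p ≠ ((0:ℝ),(0:ℝ),(0:ℝ)) := by
  rw [zd_eq] at hp
  simp only [Set.mem_setOf_eq, dirEq] at hp
  obtain ⟨a, ha, rfl⟩ := List.mem_map.1 hp
  intro h0
  have : a = ((0,0),(0,0),(0,0)) := EV_inj (by rw [h0]; simp [EV, ev2])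
  exact LQ_zero (this ▸ ha)

lemma np' {p q : ℝ × ℝ × ℝ} (hp : p ∈ zeroDirections) (hq : q ∈ zeroDirections)
    (t : ℝ) (h : p = t • q) : p = q := by
  rw [zd_eq] at hp hq
  exact np p hp q hq t h

/-- The forward direction of the classification. -/
lemma forward (x y z : ℝ) (h : (x, y, z) ≠ ((0:ℝ), (0:ℝ), (0:ℝ)))
    (h1 : A x y z = 0) (h2 : A y z x = 0) (h3 : A z x y = 0) :
    ∃ c : ℝ, c ≠ 0 ∧ ∃ d ∈ zeroDirections, (x, y, z) = c • d := by
  rcases eq_or_ne x 0 with hx | hx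
  · subst hx
    rcases eq_or_ne y 0 with hy | hy
    · subst hy
      have hz : z ≠ 0 := by
        intro hz; exact h (by rw [hz])
      refine ⟨z, hz, ((0:ℝ), (0:ℝ), (1:ℝ)), by
        simp only [zeroDirections, Set.mem_insert_iff, Set.mem_singleton_iff,
          eq_self_iff_true, true_or, or_true], ?_⟩
      simp only [Prod.smul_mk, smul_eq_mul, Prod.mk.injEq]
      exact ⟨by ring, by ring, by ring⟩
    · rcases eq_or_ne z 0 with hz | hz
      · subst hz
        refine ⟨y, hy, ((0:ℝ), (1:ℝ), (0:ℝ)), by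
          simp only [zeroDirections, Set.mem_insert_iff, Set.mem_singleton_iff,
            eq_self_iff_true, true_or, or_true], ?_⟩
        simp only [Prod.smul_mk, smul_eq_mul, Prod.mk.injEq]
        exact ⟨by ring, by ring, by ring⟩
      · -- x = 0, y ≠ 0, z ≠ 0 : use core0 on (y, z, 0-in-third)
        have hQ : Qf 0 y z = 0 := by
          have := h1; rw [A_factor] at this
          exact (mul_eq_zero.1 this).resolve_left (mul_ne_zero hy hz)
        obtain ⟨c, hc, d, hd, heq⟩ := core0 y z hy hz hQ
        obtain ⟨d1, d2, d3⟩ := d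
        simp only [Prod.smul_mk, smul_eq_mul, Prod.mk.injEq] at heq
        obtain ⟨e1, e2, e3⟩ := heq
        refine ⟨c, hc, (d3, d1, d2), zd_shift hd, ?_⟩
        simp only [Prod.smul_mk, smul_eq_mul, Prod.mk.injEq]
        exact ⟨by rw [← e3], by rw [← e1], by rw [← e2]⟩
  · rcases eq_or_ne y 0 with hy | hy
    · subst hy
      rcases eq_or_ne z 0 with hz | hz
      · subst hz
        refine ⟨x, hx, ((1:ℝ), (0:ℝ), (0:ℝ)), by
          simp only [zeroDirections, Set.mem_insert_iff, Set.mem_singleton_iff,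
            eq_self_iff_true, true_or, or_true], ?_⟩
        simp only [Prod.smul_mk, smul_eq_mul, Prod.mk.injEq]
        exact ⟨by ring, by ring, by ring⟩
      · -- y = 0, x ≠ 0, z ≠ 0 : use core0 on (z, x)
        have hQ : Qf 0 z x = 0 := by
          have := h2; rw [A_factor] at this
          exact (mul_eq_zero.1 this).resolve_left (mul_ne_zero hz hx)
        obtain ⟨c, hc, d, hd, heq⟩ := core0 z x hz hx hQ
        obtain ⟨d1, d2, d3⟩ := d
        simp only [Prod.smul_mk, smul_eq_mul, Prod.mk.injEq] at heq
        obtain ⟨e1, e2, e3⟩ := heq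
        refine ⟨c, hc, (d2, d3, d1), zd_shift (zd_shift hd), ?_⟩
        simp only [Prod.smul_mk, smul_eq_mul, Prod.mk.injEq]
        exact ⟨by rw [← e2], by rw [← e3], by rw [← e1]⟩
    · rcases eq_or_ne z 0 with hz | hz
      · -- z = 0, x ≠ 0, y ≠ 0
        subst hz
        have hQ : Qf 0 x y = 0 := by
          have := h3; rw [A_factor] at this
          exact (mul_eq_zero.1 this).resolve_left (mul_ne_zero hx hy)
        exact core0 x y hx hy hQ
      · -- all nonzero
        have hQ1 : Qf x y z = 0 := by
          have := h1; rw [A_factor] at this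
          exact (mul_eq_zero.1 this).resolve_left (mul_ne_zero hy hz)
        have hQ2 : Qf y z x = 0 := by
          have := h2; rw [A_factor] at this
          exact (mul_eq_zero.1 this).resolve_left (mul_ne_zero hz hx)
        exact coreMain x y z hx hy hz hQ1 hQ2

lemma part1 : ∀ x y z : ℝ, (x, y, z) ≠ (0, 0, 0) →
    ((A x y z = 0 ∧ A y z x = 0 ∧ A z x y = 0) ↔
      ∃ c : ℝ, c ≠ 0 ∧ ∃ d ∈ zeroDirections, (x, y, z) = c • d) := by
  intro x y z h
  constructor
  · rintro ⟨h1, h2, h3⟩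
    exact forward x y z h h1 h2 h3
  · rintro ⟨c, hc, ⟨d1, d2, d3⟩, hd, heq⟩
    simp only [Prod.smul_mk, smul_eq_mul, Prod.mk.injEq] at heq
    obtain ⟨rfl, rfl, rfl⟩ := heq
    obtain ⟨t1, t2, t3⟩ := Tall d1 d2 d3 hd
    exact ⟨by rw [Ahom, t1, mul_zero], by rw [Ahom, t2, mul_zero], by rw [Ahom, t3, mul_zero]⟩
noncomputable def nsq (p : ℝ × ℝ × ℝ) : ℝ := p.1^2 + p.2.1^2 + p.2.2^2
noncomputable def nrm (p : ℝ × ℝ × ℝ) : ℝ := Real.sqrt (nsq p)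
noncomputable def nmap (p : ℝ × ℝ × ℝ) : ℝ × ℝ × ℝ := (nrm p)⁻¹ • p

lemma nsq_pos {p : ℝ × ℝ × ℝ} (h : p ≠ ((0:ℝ),(0:ℝ),(0:ℝ))) : 0 < nsq p := by
  obtain ⟨a, b, c⟩ := p
  have h' : a ≠ 0 ∨ b ≠ 0 ∨ c ≠ 0 := by
    by_contra hc
    push_neg at hc
    exact h (by simp [hc.1, hc.2.1, hc.2.2])
  simp only [nsq]
  rcases h' with h'|h'|h'
  · nlinarith [pow_two_pos_of_ne_zero h', sq_nonneg b, sq_nonneg c]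
  · nlinarith [pow_two_pos_of_ne_zero h', sq_nonneg a, sq_nonneg c]
  · nlinarith [pow_two_pos_of_ne_zero h', sq_nonneg a, sq_nonneg b]

lemma nsq_smul (c : ℝ) (p : ℝ × ℝ × ℝ) : nsq (c • p) = c^2 * nsq p := by
  obtain ⟨a, b, d⟩ := p
  simp only [nsq, Prod.smul_mk, smul_eq_mul]
  ring

lemma nrm_pos {p : ℝ × ℝ × ℝ} (h : p ≠ ((0:ℝ),(0:ℝ),(0:ℝ))) : 0 < nrm p :=
  Real.sqrt_pos.2 (nsq_pos h)

lemma nrm_sq {p : ℝ × ℝ × ℝ} (h : p ≠ ((0:ℝ),(0:ℝ),(0:ℝ))) : (nrm p)^2 = nsq p :=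
  Real.sq_sqrt (le_of_lt (nsq_pos h))

lemma nsq_nmap {p : ℝ × ℝ × ℝ} (h : p ≠ ((0:ℝ),(0:ℝ),(0:ℝ))) : nsq (nmap p) = 1 := by
  rw [nmap, nsq_smul, ← nrm_sq h]
  field_simp [ne_of_gt (nrm_pos h)]

lemma smul_nmap {p : ℝ × ℝ × ℝ} (h : p ≠ ((0:ℝ),(0:ℝ),(0:ℝ))) : (nrm p) • nmap p = p := by
  rw [nmap, smul_smul, mul_inv_cancel₀ (ne_of_gt (nrm_pos h)), one_smul]

noncomputable def S : Set (ℝ × ℝ × ℝ) :=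
  {p : ℝ × ℝ × ℝ | p.1 ^ 2 + p.2.1 ^ 2 + p.2.2 ^ 2 = 1 ∧
    A p.1 p.2.1 p.2.2 = 0 ∧ A p.2.1 p.2.2 p.1 = 0 ∧ A p.2.2 p.1 p.2.1 = 0}

lemma smul_mem_S {d : ℝ × ℝ × ℝ} (hd : d ∈ zeroDirections) {c : ℝ}
    (hn : nsq (c • d) = 1) : (c • d) ∈ S := by
  obtain ⟨d1, d2, d3⟩ := d
  obtain ⟨t1, t2, t3⟩ := Tall d1 d2 d3 hd
  refine ⟨hn, ?_, ?_, ?_⟩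
  · show A (c*d1) (c*d2) (c*d3) = 0
    rw [Ahom, t1, mul_zero]
  · show A (c*d2) (c*d3) (c*d1) = 0
    rw [Ahom, t2, mul_zero]
  · show A (c*d3) (c*d1) (c*d2) = 0
    rw [Ahom, t3, mul_zero]

lemma S_eq : S = nmap '' zeroDirections ∪ (fun p => -nmap p) '' zeroDirections := by
  ext p
  constructor
  · rintro ⟨hn, h1, h2, h3⟩
    have hp0 : p ≠ ((0:ℝ),(0:ℝ),(0:ℝ)) := by
      intro h0
      rw [h0] at hn
      norm_num at hn
    obtain ⟨a, b, c⟩ := p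
    obtain ⟨t, ht, d, hd, heq⟩ := forward a b c hp0 h1 h2 h3
    have hd0 : d ≠ ((0:ℝ),(0:ℝ),(0:ℝ)) := dir_ne_zero hd
    have hnsq : t^2 * nsq d = 1 := by
      rw [← nsq_smul, ← heq]; exact hn
    have hnrmd : nrm d = |t|⁻¹ := by
      have habs : (|t|⁻¹)^2 = nsq d := by
        rw [inv_pow, sq_abs]
        field_simp
        linear_combination -hnsq
      rw [nrm, ← habs, Real.sqrt_sq (by positivity)]
    rcases lt_or_gt_of_ne ht with htn | htp
    · right
      refine ⟨d, hd, ?_⟩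
      simp only
      rw [nmap, hnrmd, inv_inv, abs_of_neg htn, heq, ← neg_smul, neg_neg]
    · left
      refine ⟨d, hd, ?_⟩
      rw [nmap, hnrmd, inv_inv, abs_of_pos htp, heq]
  · rintro (⟨d, hd, rfl⟩ | ⟨d, hd, rfl⟩)
    · exact smul_mem_S hd (nsq_nmap (dir_ne_zero hd))
    · have hd0 := dir_ne_zero hd
      have hns : -nmap d = (-(nrm d)⁻¹) • d := by rw [neg_smul]; rfl
      show -nmap d ∈ S
      rw [hns]
      refine smul_mem_S hd ?_
      rw [nsq_smul, neg_sq, ← nsq_smul]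
      show nsq (nmap d) = 1
      exact nsq_nmap hd0

lemma injOn_nmap : Set.InjOn nmap zeroDirections := by
  intro d hd d' hd' h
  have hd0 := dir_ne_zero hd
  have hd0' := dir_ne_zero hd'
  have key : (nrm d * (nrm d')⁻¹) • d' = d := by
    rw [← smul_smul]
    show nrm d • nmap d' = d
    rw [← h, smul_nmap hd0]
  exact np' hd hd' _ key.symm

lemma injOn_negnmap : Set.InjOn (fun p => -nmap p) zeroDirections := by
  intro d hd d' hd' h
  simp only [neg_inj] at h
  exact injOn_nmap hd hd' h

lemma disjoint_images :
    Disjoint (nmap '' zeroDirections) ((fun p => -nmap p) '' zeroDirections) := by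
  rw [Set.disjoint_left]
  rintro p ⟨d, hd, rfl⟩ ⟨d', hd', hne⟩
  simp only at hne
  have hd0 := dir_ne_zero hd
  have hd0' := dir_ne_zero hd'
  have h2 : nmap d' = -nmap d := by rw [← hne, neg_neg]
  have hpar : (-(nrm d) * (nrm d')⁻¹) • d' = d := by
    rw [← smul_smul]
    show (-(nrm d)) • nmap d' = d
    rw [h2, neg_smul_neg, smul_nmap hd0]
  have hdd : d = d' := np' hd hd' _ hpar.symm
  subst hdd
  have hone := nsq_nmap hd0
  rcases hnm : nmap d with ⟨u1, u2, u3⟩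
  rw [hnm] at hone h2
  simp only [nsq] at hone
  simp only [Prod.mk.injEq, Prod.neg_mk] at h2
  norm_num at hone
  nlinarith [h2.1, h2.2.1, h2.2.2]

lemma zd_finite : zeroDirections.Finite := by
  rw [zd_eq]
  exact dirList.finite_toSet

lemma zd_ncard : zeroDirections.ncard = 31 := by
  rw [zd_eq]
  have : {p | p ∈ dirList} = ↑dirList.toFinset := by
    ext p; simp [List.mem_toFinset]
  rw [this, Set.ncard_coe_finset, List.toFinset_card_of_nodup dir_nodup, dir_len]

lemma part2 : S.ncard = 62 := by
  rw [S_eq]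
  rw [Set.ncard_union_eq disjoint_images
    (zd_finite.image _) (zd_finite.image _)]
  rw [Set.ncard_image_of_injOn injOn_nmap, Set.ncard_image_of_injOn injOn_negnmap, zd_ncard]


/-- The simultaneous zeros of `A(x,y,z)`, `A(y,z,x)`, `A(z,x,y)` away from the origin are
exactly the nonzero scalar multiples of the 31 listed directions; equivalently, the
icosahedral vector field has exactly 62 zeros on the unit sphere, equal to the number of
faces (20), vertices (12), and edges (30) of an icosahedron. -/
theorem stmt10 :
    (∀ x y z : ℝ, (x, y, z) ≠ (0, 0, 0) →
      ((A x y z = 0 ∧ A y z x = 0 ∧ A z x y = 0) ↔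
        ∃ c : ℝ, c ≠ 0 ∧ ∃ d ∈ zeroDirections, (x, y, z) = c • d)) ∧
    {p : ℝ × ℝ × ℝ | p.1 ^ 2 + p.2.1 ^ 2 + p.2.2 ^ 2 = 1 ∧
      A p.1 p.2.1 p.2.2 = 0 ∧ A p.2.1 p.2.2 p.1 = 0 ∧ A p.2.2 p.1 p.2.1 = 0}.ncard
      = 62 := by
  exact ⟨part1, part2⟩
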